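/- Let U ⊆ ℝ^m be open and convex and Ω ⊆ ℝ^n be open. Let u : U × Ω → ℝ be continuous and suppose: (i) there is K ≥ 0 with |u(x₁,y) − u(x₂,y)| ≤ K·‖x₁ − x₂‖ for all x₁, x₂ ∈ U and y ∈ Ω; (ii) for every x ∈ U the map y ↦ u(x,y) is differentiable and the gradient ∇_y u is continuous on U × Ω; (iii) for each x ∈ U the level set S_x := {y ∈ Ω : u(x,y) = 0} is nonempty and compact, the map x ↦ S_x is continuous with respect to the Hausdorff distance, and there is a compact set Q ⊆ Ω with S_x ⊆ Q for all x ∈ U; (iv) there is A > 0 with ‖∇_y u(x,y)‖ ≥ A whenever u(x,y) = 0. Then for all x₁, x₂ ∈ U the Hausdorff distance satisfies d_H(S_{x₁}, S_{x₂}) ≤ (2K/A)·‖x₁ − x₂‖; in particular the level-set distribution x ↦ S_x is Lipschitz in the Hausdorff distance. -/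

import Mathlib

open Metric Set

private lemma crossing_aux {n : ℕ} (Ω : Set (EuclideanSpace ℝ (Fin n)))
    (v : EuclideanSpace ℝ (Fin n) → ℝ)
    (G : EuclideanSpace ℝ (Fin n) → EuclideanSpace ℝ (Fin n))
    (hG : ∀ y ∈ Ω, HasGradientAt v (G y) y)
    (y e : EuclideanSpace ℝ (Fin n))
    (A τ : ℝ) (hτ : 0 ≤ τ)
    (hseg : ∀ t : ℝ, |t| ≤ τ → y + t • e ∈ Ω ∧ A / 2 ≤ (inner ℝ (G (y + t • e)) e : ℝ))
    (hv : |v y| ≤ (A / 2) * τ) :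
    ∃ t : ℝ, |t| ≤ τ ∧ v (y + t • e) = 0 := by
  rcases eq_or_lt_of_le hτ with h0 | hτpos
  · refine ⟨0, by simpa using hτ, ?_⟩
    have : |v y| ≤ 0 := by rw [← h0] at hv; linarith
    have : v y = 0 := abs_eq_zero.mp (le_antisymm this (abs_nonneg _))
    simpa using this
  set φ : ℝ → ℝ := fun t => v (y + t • e) with hφ
  have hφ' : ∀ t : ℝ, |t| ≤ τ → HasDerivAt φ ((inner ℝ (G (y + t • e)) e : ℝ)) t := by
    intro t ht
    have hline : HasDerivAt (fun t : ℝ => y + t • e) e t := by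
      simpa using ((hasDerivAt_id t).smul_const e).const_add y
    have hgrad := (hG _ (hseg t ht).1).hasFDerivAt
    have := hgrad.comp_hasDerivAt t hline
    simp only [InnerProductSpace.toDual_apply_apply] at this
    exact this
  have hcont : ContinuousOn φ (Icc (-τ) τ) := by
    intro t ht
    exact ((hφ' t (abs_le.mpr ⟨ht.1, ht.2⟩)).continuousAt).continuousWithinAt
  have hτmem : ∀ t ∈ Ioo (0:ℝ) τ, |t| ≤ τ := fun t ht =>
    abs_le.mpr ⟨by linarith [ht.1], le_of_lt ht.2⟩
  obtain ⟨c, hc, hceq⟩ := exists_hasDerivAt_eq_slope φ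
    (fun t => (inner ℝ (G (y + t • e)) e : ℝ)) hτpos
    (hcont.mono (Icc_subset_Icc (by linarith) le_rfl))
    (fun t ht => hφ' t (hτmem t ht))
  have h1 : (A/2) ≤ (φ τ - φ 0) / (τ - 0) := hceq ▸ (hseg c (hτmem c hc)).2
  have hφτ : φ 0 + (A/2) * τ ≤ φ τ := by
    rw [div_le_div_iff₀ (by norm_num) (by linarith)] at h1
    · nlinarith
  obtain ⟨c', hc', hceq'⟩ := exists_hasDerivAt_eq_slope φ
    (fun t => (inner ℝ (G (y + t • e)) e : ℝ)) (show -τ < 0 by linarith)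
    (hcont.mono (Icc_subset_Icc le_rfl (by linarith)))
    (fun t ht => hφ' t (abs_le.mpr ⟨le_of_lt ht.1, by linarith [ht.2]⟩))
  have h2 : (A/2) ≤ (φ 0 - φ (-τ)) / (0 - -τ) :=
    hceq' ▸ (hseg c' (abs_le.mpr ⟨le_of_lt hc'.1, by linarith [hc'.2]⟩)).2
  have hφmτ : φ (-τ) ≤ φ 0 - (A/2) * τ := by
    rw [le_div_iff₀ (by linarith)] at h2
    nlinarith
  have habs := abs_le.mp hv
  have hφ0 : φ 0 = v y := by simp [hφ]
  have hzero : (0:ℝ) ∈ Icc (φ (-τ)) (φ τ) := by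
    constructor
    · linarith [habs.2, hφmτ, hφ0]
    · linarith [habs.1, hφτ, hφ0]
  obtain ⟨t, ht, htz⟩ := intermediate_value_Icc (by linarith : -τ ≤ τ) hcont hzero
  exact ⟨t, abs_le.mpr ⟨ht.1, ht.2⟩, htz⟩

private lemma local_est
    {m n : ℕ}
    (U : Set (EuclideanSpace ℝ (Fin m))) (hU_open : IsOpen U)
    (Ω : Set (EuclideanSpace ℝ (Fin n))) (hΩ_open : IsOpen Ω)
    (u : EuclideanSpace ℝ (Fin m) → EuclideanSpace ℝ (Fin n) → ℝ)
    (K : ℝ) (hK : 0 ≤ K)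
    (hu_lip : ∀ x₁ ∈ U, ∀ x₂ ∈ U, ∀ y ∈ Ω, |u x₁ y - u x₂ y| ≤ K * ‖x₁ - x₂‖)
    (g : EuclideanSpace ℝ (Fin m) → EuclideanSpace ℝ (Fin n) →
      EuclideanSpace ℝ (Fin n))
    (hg : ∀ x ∈ U, ∀ y ∈ Ω, HasGradientAt (u x) (g x y) y)
    (hg_cont : ContinuousOn (fun p => g p.1 p.2) (U ×ˢ Ω))
    (S : EuclideanSpace ℝ (Fin m) → Set (EuclideanSpace ℝ (Fin n)))
    (hS_def : ∀ x, S x = {y ∈ Ω | u x y = 0})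
    (hS_ne : ∀ x ∈ U, (S x).Nonempty)
    (hS_cpt : ∀ x ∈ U, IsCompact (S x))
    (hS_hcont : ∀ x ∈ U, ∀ ε > (0 : ℝ), ∃ δ > (0 : ℝ), ∀ x' ∈ U,
      ‖x' - x‖ < δ → hausdorffDist (S x') (S x) < ε)
    (A : ℝ) (hA : 0 < A)
    (hgA : ∀ x ∈ U, ∀ y ∈ Ω, u x y = 0 → A ≤ ‖g x y‖)
    (x₀ : EuclideanSpace ℝ (Fin m)) (hx₀ : x₀ ∈ U) :
    ∃ δ > (0:ℝ), ∀ x ∈ U, ‖x - x₀‖ < δ →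
      hausdorffDist (S x) (S x₀) ≤ (2 * K / A) * ‖x - x₀‖ := by
  -- membership in S
  have hSmem : ∀ x y, y ∈ S x ↔ (y ∈ Ω ∧ u x y = 0) := by
    intro x y; rw [hS_def]; exact Iff.rfl
  -- Step 1: local gradient lower bound near each point of S x₀
  have hB : ∀ y₀ : EuclideanSpace ℝ (Fin n), ∃ r : ℝ, ∃ e : EuclideanSpace ℝ (Fin n),
      y₀ ∈ S x₀ → (0 < r ∧ ‖e‖ = 1 ∧
        (∀ y', dist y' y₀ < r → y' ∈ Ω) ∧
        (∀ x', x' ∈ U → ‖x' - x₀‖ < r → ∀ y', dist y' y₀ < r →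
          A / 2 ≤ (inner ℝ (g x' y') e : ℝ))) := by
    intro y₀
    by_cases hy₀ : y₀ ∈ S x₀
    · have hy₀Ω : y₀ ∈ Ω := ((hSmem x₀ y₀).mp hy₀).1
      have hy₀z : u x₀ y₀ = 0 := ((hSmem x₀ y₀).mp hy₀).2
      have hgne : g x₀ y₀ ≠ 0 := by
        intro h
        have := hgA x₀ hx₀ y₀ hy₀Ω hy₀z
        rw [h, norm_zero] at this; linarith
      set e := ‖g x₀ y₀‖⁻¹ • g x₀ y₀ with he
      have hne : ‖e‖ = 1 := norm_smul_inv_norm hgne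
      have hval : (inner ℝ (g x₀ y₀) e : ℝ) = ‖g x₀ y₀‖ := by
        rw [he, real_inner_smul_right, real_inner_self_eq_norm_sq]
        field_simp [norm_ne_zero_iff.mpr hgne]
      have hmemP : ((x₀, y₀) : _ × _) ∈ U ×ˢ Ω := ⟨hx₀, hy₀Ω⟩
      have hca : ContinuousAt (fun p : EuclideanSpace ℝ (Fin m) × EuclideanSpace ℝ (Fin n) =>
          (inner ℝ (g p.1 p.2) e : ℝ)) (x₀, y₀) := by
        have h1 := hg_cont.continuousAt ((hU_open.prod hΩ_open).mem_nhds hmemP)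
        exact h1.inner continuousAt_const
      have hval2 : A / 2 < (inner ℝ (g x₀ y₀) e : ℝ) := by
        rw [hval]; linarith [hgA x₀ hx₀ y₀ hy₀Ω hy₀z]
      have hev : ∀ᶠ p : EuclideanSpace ℝ (Fin m) × EuclideanSpace ℝ (Fin n) in
          nhds (x₀, y₀), A / 2 < (inner ℝ (g p.1 p.2) e : ℝ) :=
        hca.eventually (eventually_gt_nhds hval2)
      obtain ⟨r₁, hr₁, hr₁p⟩ := Metric.eventually_nhds_iff.mp hev
      obtain ⟨r₂, hr₂, hr₂Ω⟩ := Metric.isOpen_iff.mp hΩ_open y₀ hy₀Ω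
      refine ⟨min r₁ r₂, e, fun _ => ⟨lt_min hr₁ hr₂, hne, ?_, ?_⟩⟩
      · intro y' hy'
        exact hr₂Ω (lt_of_lt_of_le hy' (min_le_right _ _))
      · intro x' _ hx' y' hy'
        have hdp : dist ((x', y') : EuclideanSpace ℝ (Fin m) × EuclideanSpace ℝ (Fin n))
            (x₀, y₀) < r₁ := by
          rw [Prod.dist_eq]
          refine max_lt ?_ (lt_of_lt_of_le hy' (min_le_left _ _))
          rw [dist_eq_norm]
          exact lt_of_lt_of_le hx' (min_le_left _ _)
        exact le_of_lt (hr₁p hdp)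
    · exact ⟨1, 0, fun hc => absurd hc hy₀⟩
  choose r e hre using hB
  -- Step 2: finite subcover
  have hcover : S x₀ ⊆ ⋃ y₀ ∈ S x₀, ball y₀ (r y₀ / 4) := by
    intro y₀ hy₀
    exact mem_biUnion hy₀ (mem_ball_self (by linarith [(hre y₀ hy₀).1]))
  obtain ⟨b, hbsub, hbfin, hbcov⟩ := (hS_cpt x₀ hx₀).elim_finite_subcover_image
    (fun y₀ _ => isOpen_ball) hcover
  have hbne : b.Nonempty := by
    obtain ⟨y, hy⟩ := hS_ne x₀ hx₀
    obtain ⟨i, hi, _⟩ := mem_iUnion₂.mp (hbcov hy)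
    exact ⟨i, hi⟩
  set t := hbfin.toFinset with htdef
  have htne : t.Nonempty := by
    obtain ⟨i, hi⟩ := hbne
    exact ⟨i, hbfin.mem_toFinset.mpr hi⟩
  set rmin := t.inf' htne r with hrmin
  have hrminpos : 0 < rmin := by
    rw [hrmin, Finset.lt_inf'_iff]
    intro i hi
    exact (hre i (hbsub (hbfin.mem_toFinset.mp hi))).1
  have hrminle : ∀ i ∈ b, rmin ≤ r i := fun i hi =>
    Finset.inf'_le r (hbfin.mem_toFinset.mpr hi)
  -- Step 3: choose δ
  obtain ⟨δ₁, hδ₁, hδ₁p⟩ := hS_hcont x₀ hx₀ (rmin / 4) (by linarith)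
  set δ := min δ₁ (min rmin (A * rmin / (4 * (K + 1)))) with hδdef
  have hδpos : 0 < δ := by
    apply lt_min hδ₁ (lt_min hrminpos _)
    positivity
  refine ⟨δ, hδpos, ?_⟩
  intro x hx hxδ
  set τ := 2 * K / A * ‖x - x₀‖ with hτdef
  have hτ0 : 0 ≤ τ := by positivity
  have hxrm : ‖x - x₀‖ < rmin := lt_of_lt_of_le hxδ
    (le_trans (min_le_right _ _) (min_le_left _ _))
  have hτrm : τ ≤ rmin / 2 := by
    have h1 : ‖x - x₀‖ ≤ A * rmin / (4 * (K + 1)) := le_of_lt (lt_of_lt_of_le hxδ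
      (le_trans (min_le_right _ _) (min_le_right _ _)))
    have h2 : 2 * K / A * ‖x - x₀‖ ≤ 2 * K / A * (A * rmin / (4 * (K + 1))) :=
      mul_le_mul_of_nonneg_left h1 (by positivity)
    have heq : 2 * K / A * (A * rmin / (4 * (K + 1))) = K * rmin / (2 * (K + 1)) := by
      field_simp
      ring
    have h3 : K * rmin / (2 * (K + 1)) ≤ rmin / 2 := by
      rw [div_le_div_iff₀ (by positivity) (by norm_num)]
      nlinarith
    rw [hτdef]
    linarith
  have hKτ : K * ‖x - x₀‖ = (A / 2) * τ := by
    rw [hτdef]; field_simp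
  have fin : EMetric.hausdorffEdist (S x) (S x₀) ≠ ⊤ :=
    hausdorffEdist_ne_top_of_nonempty_of_bounded (hS_ne x hx) (hS_ne x₀ hx₀)
      (hS_cpt x hx).isBounded (hS_cpt x₀ hx₀).isBounded
  apply hausdorffDist_le_of_mem_dist hτ0
  · -- points of S x are close to S x₀
    intro y hy
    have hyΩ : y ∈ Ω := ((hSmem x y).mp hy).1
    have hyz : u x y = 0 := ((hSmem x y).mp hy).2
    have hdH : hausdorffDist (S x) (S x₀) < rmin / 4 := hδ₁p x hx
      (lt_of_lt_of_le hxδ (min_le_left _ _))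
    obtain ⟨y₀, hy₀, hdy₀⟩ := exists_dist_lt_of_hausdorffDist_lt hy hdH fin
    obtain ⟨i, hi, hyi⟩ := mem_iUnion₂.mp (hbcov hy₀)
    have hiS : i ∈ S x₀ := hbsub hi
    obtain ⟨hri, hei, hΩi, hinner⟩ := hre i hiS
    have hrle : rmin ≤ r i := hrminle i hi
    have hdyi : dist y i < r i / 2 := by
      have := dist_triangle y y₀ i
      have h2 : dist y₀ i < r i / 4 := mem_ball.mp hyi
      linarith
    have hseg : ∀ s : ℝ, |s| ≤ τ → (y + s • e i) ∈ Ω ∧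
        A / 2 ≤ (inner ℝ (g x₀ (y + s • e i)) (e i) : ℝ) := by
      intro s hs
      have hd : dist (y + s • e i) i < r i := by
        have h3 : dist (y + s • e i) y = |s| := by
          simp [dist_eq_norm, norm_smul, hei]
        have := dist_triangle (y + s • e i) y i
        have : dist (y + s • e i) i ≤ |s| + dist y i := by linarith
        linarith
      refine ⟨hΩi _ hd, hinner x₀ hx₀ (by simpa using hri) _ hd⟩
    have hv : |u x₀ y| ≤ (A / 2) * τ := by
      rw [← hKτ]
      have := hu_lip x₀ hx₀ x hx y hyΩ
      rw [hyz, sub_zero, norm_sub_rev x₀ x] at this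
      exact this
    obtain ⟨s, hsτ, hsz⟩ := crossing_aux Ω (u x₀) (g x₀) (hg x₀ hx₀) y (e i) A τ hτ0 hseg hv
    refine ⟨y + s • e i, ?_, ?_⟩
    · refine (hSmem x₀ _).mpr ⟨?_, hsz⟩
      have hd : dist (y + s • e i) i < r i := by
        have h3 : dist (y + s • e i) y = |s| := by
          simp [dist_eq_norm, norm_smul, hei]
        have := dist_triangle (y + s • e i) y i
        linarith
      exact hΩi _ hd
    · have : dist y (y + s • e i) = |s| := by
        simp [dist_eq_norm, norm_smul, hei]
      rw [this]; exact hsτ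
  · -- points of S x₀ are close to S x
    intro y₀ hy₀
    have hy₀Ω : y₀ ∈ Ω := ((hSmem x₀ y₀).mp hy₀).1
    have hy₀z : u x₀ y₀ = 0 := ((hSmem x₀ y₀).mp hy₀).2
    obtain ⟨i, hi, hyi⟩ := mem_iUnion₂.mp (hbcov hy₀)
    have hiS : i ∈ S x₀ := hbsub hi
    obtain ⟨hri, hei, hΩi, hinner⟩ := hre i hiS
    have hrle : rmin ≤ r i := hrminle i hi
    have hdyi : dist y₀ i < r i / 4 := mem_ball.mp hyi
    have hseg : ∀ s : ℝ, |s| ≤ τ → (y₀ + s • e i) ∈ Ω ∧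
        A / 2 ≤ (inner ℝ (g x (y₀ + s • e i)) (e i) : ℝ) := by
      intro s hs
      have hd : dist (y₀ + s • e i) i < r i := by
        have h3 : dist (y₀ + s • e i) y₀ = |s| := by
          simp [dist_eq_norm, norm_smul, hei]
        have := dist_triangle (y₀ + s • e i) y₀ i
        have : dist (y₀ + s • e i) i ≤ |s| + dist y₀ i := by linarith
        linarith
      exact ⟨hΩi _ hd, hinner x hx (lt_of_lt_of_le hxrm hrle) _ hd⟩
    have hv : |u x y₀| ≤ (A / 2) * τ := by
      rw [← hKτ]
      have := hu_lip x hx x₀ hx₀ y₀ hy₀Ω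
      rwa [hy₀z, sub_zero] at this
    obtain ⟨s, hsτ, hsz⟩ := crossing_aux Ω (u x) (g x) (hg x hx) y₀ (e i) A τ hτ0 hseg hv
    refine ⟨y₀ + s • e i, ?_, ?_⟩
    · refine (hSmem x _).mpr ⟨?_, hsz⟩
      have hd : dist (y₀ + s • e i) i < r i := by
        have h3 : dist (y₀ + s • e i) y₀ = |s| := by
          simp [dist_eq_norm, norm_smul, hei]
        have := dist_triangle (y₀ + s • e i) y₀ i
        linarith
      exact hΩi _ hd
    · have : dist y₀ (y₀ + s • e i) = |s| := by
        simp [dist_eq_norm, norm_smul, hei]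
      rw [this]; exact hsτ

/-- **Lipschitz dependence of level sets in the Hausdorff distance (Theorem 4.3,
Euclidean content).** Let `U ⊆ ℝ^m` be open convex, `Ω ⊆ ℝ^n` open, and
`u : U × Ω → ℝ` continuous, Lipschitz in `x` with constant `K`, differentiable in `y`
with continuous gradient `∇_y u`, whose level sets `S x = {y ∈ Ω : u x y = 0}` are
nonempty, compact, contained in a fixed compact `Q`, and vary continuously in the
Hausdorff distance, and with `‖∇_y u‖ ≥ A > 0` on the zero set. Then
`d_H (S x₁, S x₂) ≤ (2K/A) * ‖x₁ − x₂‖` for all `x₁, x₂ ∈ U`. -/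
theorem levelSet_lipschitz_hausdorff
    {m n : ℕ}
    (U : Set (EuclideanSpace ℝ (Fin m))) (hU_open : IsOpen U) (hU_conv : Convex ℝ U)
    (Ω : Set (EuclideanSpace ℝ (Fin n))) (hΩ_open : IsOpen Ω)
    (u : EuclideanSpace ℝ (Fin m) → EuclideanSpace ℝ (Fin n) → ℝ)
    (hu_cont : ContinuousOn (fun p => u p.1 p.2) (U ×ˢ Ω))
    (K : ℝ) (hK : 0 ≤ K)
    (hu_lip : ∀ x₁ ∈ U, ∀ x₂ ∈ U, ∀ y ∈ Ω, |u x₁ y - u x₂ y| ≤ K * ‖x₁ - x₂‖)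
    (g : EuclideanSpace ℝ (Fin m) → EuclideanSpace ℝ (Fin n) →
      EuclideanSpace ℝ (Fin n))
    (hg : ∀ x ∈ U, ∀ y ∈ Ω, HasGradientAt (u x) (g x y) y)
    (hg_cont : ContinuousOn (fun p => g p.1 p.2) (U ×ˢ Ω))
    (S : EuclideanSpace ℝ (Fin m) → Set (EuclideanSpace ℝ (Fin n)))
    (hS_def : ∀ x, S x = {y ∈ Ω | u x y = 0})
    (hS_ne : ∀ x ∈ U, (S x).Nonempty)
    (hS_cpt : ∀ x ∈ U, IsCompact (S x))
    (hS_hcont : ∀ x ∈ U, ∀ ε > (0 : ℝ), ∃ δ > (0 : ℝ), ∀ x' ∈ U,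
      ‖x' - x‖ < δ → hausdorffDist (S x') (S x) < ε)
    (Q : Set (EuclideanSpace ℝ (Fin n))) (hQ_cpt : IsCompact Q) (hQ_sub : Q ⊆ Ω)
    (hSQ : ∀ x ∈ U, S x ⊆ Q)
    (A : ℝ) (hA : 0 < A)
    (hgA : ∀ x ∈ U, ∀ y ∈ Ω, u x y = 0 → A ≤ ‖g x y‖) :
    ∀ x₁ ∈ U, ∀ x₂ ∈ U,
      hausdorffDist (S x₁) (S x₂) ≤ (2 * K / A) * ‖x₁ - x₂‖ := by
  have hloc := local_est U hU_open Ω hΩ_open u K hK hu_lip g hg hg_cont S hS_def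
    hS_ne hS_cpt hS_hcont A hA hgA
  intro x₁ hx₁ x₂ hx₂
  set L := ‖x₂ - x₁‖ with hL
  have hL0 : 0 ≤ L := norm_nonneg _
  set C := 2 * K / A with hC
  have hC0 : 0 ≤ C := by positivity
  set γ : ℝ → EuclideanSpace ℝ (Fin m) := fun t => x₁ + t • (x₂ - x₁) with hγ
  have hγmem : ∀ t ∈ Icc (0:ℝ) 1, γ t ∈ U := fun t ht =>
    hU_conv.add_smul_sub_mem hx₁ hx₂ ht
  have hγ0 : γ 0 = x₁ := by simp [hγ]
  have hγ1 : γ 1 = x₂ := by simp [hγ]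
  have hγd : ∀ s t : ℝ, ‖γ t - γ s‖ = |t - s| * L := by
    intro s t
    have : γ t - γ s = (t - s) • (x₂ - x₁) := by
      rw [hγ]; module
    rw [this, norm_smul, Real.norm_eq_abs]
  have hfin : ∀ x ∈ U, ∀ x' ∈ U, EMetric.hausdorffEdist (S x) (S x') ≠ ⊤ := by
    intro x hx x' hx'
    exact hausdorffEdist_ne_top_of_nonempty_of_bounded (hS_ne x hx) (hS_ne x' hx')
      (hS_cpt x hx).isBounded (hS_cpt x' hx').isBounded
  set P : Set ℝ := {t ∈ Icc (0:ℝ) 1 | hausdorffDist (S (γ t)) (S x₁) ≤ C * t * L} with hP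
  have h0P : 0 ∈ P := by
    refine ⟨⟨le_refl 0, by norm_num⟩, ?_⟩
    rw [hγ0, hausdorffDist_self_zero]
    simp
  have hPne : P.Nonempty := ⟨0, h0P⟩
  have hPbdd : BddAbove P := ⟨1, fun t ht => ht.1.2⟩
  set T := sSup P with hT
  have hT0 : 0 ≤ T := le_csSup hPbdd h0P
  have hT1 : T ≤ 1 := csSup_le hPne fun t ht => ht.1.2
  have hTU : γ T ∈ U := hγmem T ⟨hT0, hT1⟩
  obtain ⟨δ, hδpos, hδ⟩ := hloc (γ T) hTU
  set δ' := δ / (L + 1) with hδ'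
  have hδ'pos : 0 < δ' := by positivity
  have hbound : ∀ a : ℝ, 0 ≤ a → a < δ' → a * L < δ := by
    intro a ha haδ
    calc a * L ≤ a * (L + 1) := by nlinarith
      _ < δ' * (L + 1) := by nlinarith
      _ = δ := by rw [hδ']; field_simp
  have hkey : ∀ s t : ℝ, s ∈ Icc (0:ℝ) 1 → t ∈ Icc (0:ℝ) 1 → s ≤ T → T ≤ t →
      t - s < δ' → hausdorffDist (S (γ t)) (S (γ s)) ≤ C * (t - s) * L := by
    intro s t hs ht hsT hTt hst
    have hsU := hγmem s hs
    have htU := hγmem t ht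
    have hn1 : ‖γ s - γ T‖ = (T - s) * L := by
      rw [hγd T s, abs_of_nonpos (by linarith : s - T ≤ 0), neg_sub]
    have hn2 : ‖γ t - γ T‖ = (t - T) * L := by
      rw [hγd T t, abs_of_nonneg (by linarith : (0:ℝ) ≤ t - T)]
    have h1 := hδ (γ s) hsU (by
      rw [hn1]; exact hbound (T - s) (by linarith) (by linarith))
    have h2 := hδ (γ t) htU (by
      rw [hn2]; exact hbound (t - T) (by linarith) (by linarith))
    rw [hn1] at h1
    rw [hn2] at h2
    have htri : hausdorffDist (S (γ t)) (S (γ s)) ≤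
        hausdorffDist (S (γ t)) (S (γ T)) + hausdorffDist (S (γ T)) (S (γ s)) :=
      hausdorffDist_triangle (hfin _ htU _ hTU)
    have hcomm : hausdorffDist (S (γ T)) (S (γ s)) = hausdorffDist (S (γ s)) (S (γ T)) :=
      hausdorffDist_comm
    have heq : C * ((t - T) * L) + C * ((T - s) * L) = C * (t - s) * L := by ring
    linarith
  have hTP : T ∈ P := by
    rcases eq_or_lt_of_le hT0 with h00 | hTpos
    · rw [← h00]; exact h0P
    · obtain ⟨t0, ht0P, hlt⟩ := exists_lt_of_lt_csSup hPne (by linarith : T - δ' < T)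
      have ht0T : t0 ≤ T := le_csSup hPbdd ht0P
      have hk := hkey t0 T ht0P.1 ⟨hT0, hT1⟩ ht0T le_rfl (by linarith)
      refine ⟨⟨hT0, hT1⟩, ?_⟩
      have htri : hausdorffDist (S (γ T)) (S x₁) ≤
          hausdorffDist (S (γ T)) (S (γ t0)) + hausdorffDist (S (γ t0)) (S x₁) :=
        hausdorffDist_triangle (hfin _ hTU _ (hγmem t0 ht0P.1))
      have heq : C * (T - t0) * L + C * t0 * L = C * T * L := by ring
      linarith [ht0P.2]
  have hTeq : T = 1 := by
    by_contra hne
    have hTlt : T < 1 := lt_of_le_of_ne hT1 hne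
    set t' := min 1 (T + δ' / 2) with ht'
    have ht'mem : t' ∈ Icc (0:ℝ) 1 := ⟨le_min (by norm_num) (by linarith), min_le_left _ _⟩
    have hTt' : T < t' := lt_min hTlt (by linarith)
    have ht'δ : t' - T < δ' := by
      have := min_le_right (1:ℝ) (T + δ' / 2)
      rw [ht']
      linarith
    have hk := hkey T t' ⟨hT0, hT1⟩ ht'mem le_rfl (le_of_lt hTt') ht'δ
    have htri : hausdorffDist (S (γ t')) (S x₁) ≤
        hausdorffDist (S (γ t')) (S (γ T)) + hausdorffDist (S (γ T)) (S x₁) :=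
      hausdorffDist_triangle (hfin _ (hγmem t' ht'mem) _ hTU)
    have ht'P : t' ∈ P := by
      refine ⟨ht'mem, ?_⟩
      have heq : C * (t' - T) * L + C * T * L = C * t' * L := by ring
      linarith [hTP.2]
    exact absurd (le_csSup hPbdd ht'P) (not_le.mpr hTt')
  have hfinal := hTP.2
  rw [hTeq, hγ1] at hfinal
  rw [hausdorffDist_comm, norm_sub_rev x₁ x₂, ← hL]
  linarith
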